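/- Dispersion bound from the enstrophy estimate (eqs. (3.7)–(3.8)): let I be a finite index set with n ≥ 1 elements, σ ∈ (0,1], q > 1, C > 0, A ≥ 0. Suppose D_α : [0,∞) → (0,∞) is differentiable and g_α : [0,∞) → [0,∞) is continuous for each α ∈ I, with D_α′(t) ≤ C g_α(t) D_α(t)^{1−σ} for all t ≥ 0 and ∫₀ᵗ ∑_{α∈I} g_α(τ)^{q} dτ ≤ A^{q} for all t ≥ 0. Then for all t ≥ 0, ( ∑_{α∈I} D_α(t) )^{σ} ≤ ∑_{α∈I} D_α(0)^{σ} + σ C n^{(q−1)/q} A t^{(q−1)/q}; in particular there exists C_D > 0 such that ∑_{α∈I} D_α(t) ≤ C_D (1+t)^{(q−1)/(qσ)} for all t ≥ 0. -/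

import Mathlib

open Finset

open MeasureTheory in
/-- Hölder in time: `∫₀ᵗ g ≤ t^((q-1)/q) (∫₀ᵗ g^q)^(1/q)`. -/
lemma aux_holder_time {t q : ℝ} (ht : 0 ≤ t) (hq : 1 < q) (g : ℝ → ℝ)
    (hgc : Continuous g) (hgnn : ∀ x, 0 ≤ g x) :
    (∫ τ in (0:ℝ)..t, g τ)
      ≤ t ^ ((q - 1) / q) * (∫ τ in (0:ℝ)..t, g τ ^ q) ^ (1 / q) := by
  set μ := volume.restrict (Set.Ioc (0:ℝ) t) with hμ
  haveI : IsFiniteMeasure μ := by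
    constructor
    rw [hμ, Measure.restrict_apply_univ, Real.volume_Ioc]
    exact ENNReal.ofReal_lt_top
  set p := q / (q - 1) with hp
  have hpq : p.HolderConjugate q := (Real.HolderConjugate.conjExponent hq).symm
  obtain ⟨M, hM⟩ := (isCompact_Icc (a := (0:ℝ)) (b := t)).exists_bound_of_continuousOn
    hgc.continuousOn
  have hmem1 : MemLp (fun _ : ℝ => (1:ℝ)) (ENNReal.ofReal p) μ := memLp_const 1
  have hmemg : MemLp g (ENNReal.ofReal q) μ := by
    refine MemLp.of_bound hgc.aestronglyMeasurable M ?_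
    refine (ae_restrict_iff' measurableSet_Ioc).2 (ae_of_all _ fun x hx => ?_)
    exact hM x (Set.Ioc_subset_Icc_self hx)
  have h := integral_mul_le_Lp_mul_Lq_of_nonneg (μ := μ) hpq
    (ae_of_all _ fun _ => zero_le_one) (ae_of_all _ hgnn) hmem1 hmemg
  have h1 : (∫ a, (1:ℝ) * g a ∂μ) = ∫ τ in (0:ℝ)..t, g τ := by
    simp only [one_mul]
    rw [intervalIntegral.integral_of_le ht]
  have h2 : (∫ a, (1:ℝ) ^ p ∂μ) = t := by
    simp only [Real.one_rpow]
    rw [integral_const, smul_eq_mul, mul_one, hμ, measureReal_def, Measure.restrict_apply_univ,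
      Real.volume_Ioc, sub_zero, ENNReal.toReal_ofReal ht]
  have h3 : (∫ a, g a ^ q ∂μ) = ∫ τ in (0:ℝ)..t, g τ ^ q := by
    rw [intervalIntegral.integral_of_le ht]
  have h4 : 1 / p = (q - 1) / q := by
    rw [hp, one_div_div]
  rw [h1, h2, h3, h4] at h
  exact h

/-- Subadditivity of `x ↦ x^p` for `0 < p ≤ 1`, two-variable version. -/
lemma aux_rpow_add_le {a b p : ℝ} (ha : 0 ≤ a) (hb : 0 ≤ b) (hp : 0 ≤ p) (hp1 : p ≤ 1) :
    (a + b) ^ p ≤ a ^ p + b ^ p := by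
  lift a to NNReal using ha
  lift b to NNReal using hb
  exact_mod_cast NNReal.rpow_add_le_add_rpow a b hp hp1

/-- Subadditivity of `x ↦ x^p` for `0 < p ≤ 1`, finite-sum version. -/
lemma aux_sum_rpow_le {ι : Type*} (s : Finset ι) (f : ι → ℝ) {p : ℝ}
    (hp0 : 0 < p) (hp1 : p ≤ 1) (hf : ∀ i ∈ s, 0 ≤ f i) :
    (∑ i ∈ s, f i) ^ p ≤ ∑ i ∈ s, f i ^ p := by
  classical
  induction s using Finset.induction with
  | empty => simp [Real.zero_rpow hp0.ne']
  | @insert a s ha ih =>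
    rw [Finset.sum_insert ha, Finset.sum_insert ha]
    have h1 : (f a + ∑ i ∈ s, f i) ^ p ≤ f a ^ p + (∑ i ∈ s, f i) ^ p :=
      aux_rpow_add_le (hf a (Finset.mem_insert_self a s))
        (Finset.sum_nonneg fun i hi => hf i (Finset.mem_insert_of_mem hi)) hp0.le hp1
    have h2 := ih (fun i hi => hf i (Finset.mem_insert_of_mem hi))
    linarith

/-- Grönwall-type bound: `D^σ(t) ≤ D^σ(0) + σ C ∫₀ᵗ g`. -/
lemma aux_ode_bound {σ C : ℝ} (hσ0 : 0 < σ) (hC : 0 < C)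
    (D g : ℝ → ℝ) (hDpos : ∀ t, 0 < D t) (hDdiff : Differentiable ℝ D)
    (hgc : Continuous g) (hgnn : ∀ t, 0 ≤ g t)
    (hD' : ∀ t ≥ (0:ℝ), deriv D t ≤ C * g t * D t ^ (1 - σ)) :
    ∀ t ≥ (0:ℝ), D t ^ σ ≤ D 0 ^ σ + σ * C * ∫ τ in (0:ℝ)..t, g τ := by
  intro t ht
  set F : ℝ → ℝ := fun s => D s ^ σ - σ * C * ∫ τ in (0:ℝ)..s, g τ with hF
  have hderiv : ∀ s : ℝ, HasDerivAt F
      (deriv D s * σ * D s ^ (σ - 1) - σ * C * g s) s := by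
    intro s
    have h1 : HasDerivAt (fun x => D x ^ σ) (deriv D s * σ * D s ^ (σ - 1)) s :=
      (hDdiff s).hasDerivAt.rpow_const (Or.inl (hDpos s).ne')
    have h2 : HasDerivAt (fun u => ∫ τ in (0:ℝ)..u, g τ) (g s) s :=
      intervalIntegral.integral_hasDerivAt_right (hgc.intervalIntegrable _ _)
        hgc.stronglyMeasurable.stronglyMeasurableAtFilter hgc.continuousAt
    exact h1.sub ((h2.const_mul (σ * C)))
  have hanti : AntitoneOn F (Set.Ici (0:ℝ)) := by
    apply antitoneOn_of_deriv_nonpos (convex_Ici 0)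
    · exact fun x _ => ((hderiv x).differentiableAt).continuousAt.continuousWithinAt
    · intro x _
      exact ((hderiv x).differentiableAt).differentiableWithinAt
    · intro x hx
      rw [interior_Ici] at hx
      rw [(hderiv x).deriv]
      have hx0 : (0:ℝ) ≤ x := le_of_lt hx
      have hDx := hDpos x
      have key : deriv D x * σ * D x ^ (σ - 1) ≤ σ * C * g x := by
        have h := mul_le_mul_of_nonneg_right (hD' x hx0)
          (mul_nonneg hσ0.le (Real.rpow_nonneg hDx.le (σ - 1)))
        calc deriv D x * σ * D x ^ (σ - 1)
            = deriv D x * (σ * D x ^ (σ - 1)) := by ring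
          _ ≤ C * g x * D x ^ (1 - σ) * (σ * D x ^ (σ - 1)) := h
          _ = σ * C * g x * (D x ^ (1 - σ) * D x ^ (σ - 1)) := by ring
          _ = σ * C * g x := by
              rw [← Real.rpow_add hDx]
              norm_num
      linarith
  have h0 : (0:ℝ) ∈ Set.Ici (0:ℝ) := Set.self_mem_Ici
  have ht' : t ∈ Set.Ici (0:ℝ) := ht
  have := hanti h0 ht' ht
  simp only [hF, intervalIntegral.integral_same, mul_zero, sub_zero] at this
  linarith

/-- Dispersion bound from the enstrophy estimate (eqs. (3.7)–(3.8)). -/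
theorem stmt_10 {I : Type*} [Fintype I] [Nonempty I]
    (σ q C A : ℝ) (hσ0 : 0 < σ) (hσ1 : σ ≤ 1) (hq : 1 < q) (hC : 0 < C) (hA : 0 ≤ A)
    (D : I → ℝ → ℝ) (g : I → ℝ → ℝ)
    (hD_pos : ∀ α t, 0 < D α t) (hD_diff : ∀ α, Differentiable ℝ (D α))
    (hg_cont : ∀ α, Continuous (g α)) (hg_nonneg : ∀ α t, 0 ≤ g α t)
    (hD' : ∀ α, ∀ t ≥ (0:ℝ), deriv (D α) t ≤ C * g α t * D α t ^ (1 - σ))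
    (hg_int : ∀ t ≥ (0:ℝ), (∫ τ in (0:ℝ)..t, ∑ α, g α τ ^ q) ≤ A ^ q) :
    (∀ t ≥ (0:ℝ),
      (∑ α, D α t) ^ σ
        ≤ (∑ α, D α 0 ^ σ)
            + σ * C * (Fintype.card I : ℝ) ^ ((q - 1) / q) * A * t ^ ((q - 1) / q)) ∧
    ∃ C_D > 0, ∀ t ≥ (0:ℝ), ∑ α, D α t ≤ C_D * (1 + t) ^ ((q - 1) / (q * σ)) := by
  have hq0 : (0:ℝ) < q := lt_trans one_pos hq
  set n : ℝ := (Fintype.card I : ℝ) with hn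
  have hn1 : (1:ℝ) ≤ n := by
    rw [hn]
    exact_mod_cast Fintype.card_pos
  set e : ℝ := (q - 1) / q with he
  have he0 : 0 < e := div_pos (by linarith) hq0
  -- main pointwise claim
  have main : ∀ t ≥ (0:ℝ),
      (∑ α, D α t) ^ σ ≤ (∑ α, D α 0 ^ σ) + σ * C * n ^ e * A * t ^ e := by
    intro t ht
    -- step 1: subadditivity
    have h1 : (∑ α, D α t) ^ σ ≤ ∑ α, D α t ^ σ :=
      aux_sum_rpow_le univ _ hσ0 hσ1 (fun α _ => (hD_pos α t).le)
    -- step 2: per-α Grönwall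
    have h2 : ∀ α : I, D α t ^ σ ≤ D α 0 ^ σ + σ * C * ∫ τ in (0:ℝ)..t, g α τ :=
      fun α => aux_ode_bound hσ0 hC (D α) (g α) (hD_pos α) (hD_diff α)
        (hg_cont α) (hg_nonneg α) (hD' α) t ht
    set a : I → ℝ := fun α => ∫ τ in (0:ℝ)..t, g α τ ^ q with ha
    have hgq_cont : ∀ α : I, Continuous (fun τ => g α τ ^ q) := fun α =>
      (hg_cont α).rpow_const (fun x => Or.inr hq0.le)
    have hann : ∀ α : I, 0 ≤ a α := fun α =>
      intervalIntegral.integral_nonneg ht (fun τ _ => Real.rpow_nonneg (hg_nonneg α τ) q)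
    have hsum_a : ∑ α, a α ≤ A ^ q := by
      rw [ha, ← intervalIntegral.integral_finset_sum]
      · exact hg_int t ht
      · exact fun α _ => (hgq_cont α).intervalIntegrable _ _
    -- step 3: Hölder in time for each α
    have h3 : ∀ α : I, (∫ τ in (0:ℝ)..t, g α τ) ≤ t ^ e * (a α) ^ (1 / q) := fun α =>
      aux_holder_time ht hq (g α) (hg_cont α) (hg_nonneg α)
    -- step 4: Hölder in α
    have h4 : ∑ α, (a α) ^ (1 / q) ≤ n ^ e * A := by
      have hsx : (0:ℝ) ≤ ∑ α, (a α) ^ (1 / q) :=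
        Finset.sum_nonneg fun α _ => Real.rpow_nonneg (hann α) _
      have hpow := Real.rpow_sum_le_const_mul_sum_rpow_of_nonneg (s := univ)
        (f := fun α => (a α) ^ (1 / q)) hq.le
        (fun α _ => Real.rpow_nonneg (hann α) _)
      have heq : ∀ α : I, ((a α) ^ (1 / q)) ^ q = a α := by
        intro α
        rw [← Real.rpow_mul (hann α), one_div, inv_mul_cancel₀ hq0.ne', Real.rpow_one]
      have hcard : ((#(univ : Finset I)) : ℝ) = n := by
        rw [hn, Finset.card_univ]
      rw [hcard] at hpow
      have hb : (∑ α, (a α) ^ (1 / q)) ^ q ≤ n ^ (q - 1) * A ^ q := by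
        calc (∑ α, (a α) ^ (1 / q)) ^ q
            ≤ n ^ (q - 1) * ∑ α, ((a α) ^ (1 / q)) ^ q := hpow
          _ = n ^ (q - 1) * ∑ α, a α := by
              congr 1
              exact Finset.sum_congr rfl fun α _ => heq α
          _ ≤ n ^ (q - 1) * A ^ q :=
              mul_le_mul_of_nonneg_left hsum_a (Real.rpow_nonneg (by linarith) _)
      have hn0 : (0:ℝ) ≤ n := by linarith
      calc ∑ α, (a α) ^ (1 / q)
          = ((∑ α, (a α) ^ (1 / q)) ^ q) ^ (1 / q) := by
            rw [← Real.rpow_mul hsx, mul_one_div, div_self hq0.ne', Real.rpow_one]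
        _ ≤ (n ^ (q - 1) * A ^ q) ^ (1 / q) :=
            Real.rpow_le_rpow (Real.rpow_nonneg hsx q) hb (by positivity)
        _ = n ^ e * A := by
            rw [Real.mul_rpow (Real.rpow_nonneg hn0 _) (Real.rpow_nonneg hA _),
              ← Real.rpow_mul hn0, ← Real.rpow_mul hA]
            have hq1 : (q - 1) * (1 / q) = e := by rw [he]; field_simp
            have hq2 : q * (1 / q) = 1 := by field_simp
            rw [hq1, hq2, Real.rpow_one]
    -- assemble
    have hte : (0:ℝ) ≤ t ^ e := Real.rpow_nonneg ht e
    have hstep : ∑ α, (∫ τ in (0:ℝ)..t, g α τ) ≤ t ^ e * (n ^ e * A) := by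
      calc ∑ α, (∫ τ in (0:ℝ)..t, g α τ)
          ≤ ∑ α, t ^ e * (a α) ^ (1 / q) := Finset.sum_le_sum fun α _ => h3 α
        _ = t ^ e * ∑ α, (a α) ^ (1 / q) := by rw [Finset.mul_sum]
        _ ≤ t ^ e * (n ^ e * A) := mul_le_mul_of_nonneg_left h4 hte
    have hσC : (0:ℝ) ≤ σ * C := mul_nonneg hσ0.le hC.le
    calc (∑ α, D α t) ^ σ
        ≤ ∑ α, D α t ^ σ := h1
      _ ≤ ∑ α, (D α 0 ^ σ + σ * C * ∫ τ in (0:ℝ)..t, g α τ) :=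
          Finset.sum_le_sum fun α _ => h2 α
      _ = (∑ α, D α 0 ^ σ) + σ * C * ∑ α, (∫ τ in (0:ℝ)..t, g α τ) := by
          rw [Finset.sum_add_distrib, Finset.mul_sum]
      _ ≤ (∑ α, D α 0 ^ σ) + σ * C * (t ^ e * (n ^ e * A)) := by
          have := mul_le_mul_of_nonneg_left hstep hσC
          linarith
      _ = (∑ α, D α 0 ^ σ) + σ * C * n ^ e * A * t ^ e := by ring
  refine ⟨main, ?_⟩
  -- second claim
  set B : ℝ := (∑ α, D α 0 ^ σ) + σ * C * n ^ e * A with hB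
  have hB0 : 0 < B := by
    have h1 : 0 < ∑ α, D α 0 ^ σ :=
      Finset.sum_pos (fun α _ => Real.rpow_pos_of_pos (hD_pos α 0) σ) univ_nonempty
    have h2 : 0 ≤ σ * C * n ^ e * A := by positivity
    linarith
  refine ⟨B ^ (1 / σ), Real.rpow_pos_of_pos hB0 _, fun t ht => ?_⟩
  have hx : (0:ℝ) ≤ ∑ α, D α t := Finset.sum_nonneg fun α _ => (hD_pos α t).le
  have h1t : (0:ℝ) ≤ 1 + t := by linarith
  have hone : (1:ℝ) ≤ (1 + t) ^ e := by
    calc (1:ℝ) = 1 ^ e := (Real.one_rpow e).symm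
      _ ≤ (1 + t) ^ e := Real.rpow_le_rpow zero_le_one (by linarith) he0.le
  have hte : t ^ e ≤ (1 + t) ^ e := Real.rpow_le_rpow ht (by linarith) he0.le
  have h6 : (∑ α, D α t) ^ σ ≤ B * (1 + t) ^ e := by
    have hm := main t ht
    have hd0 : (0:ℝ) ≤ ∑ α, D α 0 ^ σ :=
      Finset.sum_nonneg fun α _ => Real.rpow_nonneg (hD_pos α 0).le σ
    have hK : (0:ℝ) ≤ σ * C * n ^ e * A := by positivity
    calc (∑ α, D α t) ^ σ
        ≤ (∑ α, D α 0 ^ σ) + σ * C * n ^ e * A * t ^ e := hm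
      _ ≤ (∑ α, D α 0 ^ σ) * (1 + t) ^ e + σ * C * n ^ e * A * ((1 + t) ^ e) := by
          have ha := le_mul_of_one_le_right hd0 hone
          have hb := mul_le_mul_of_nonneg_left hte hK
          linarith
      _ = B * (1 + t) ^ e := by rw [hB]; ring
  have hfinal : ∑ α, D α t ≤ (B * (1 + t) ^ e) ^ (1 / σ) := by
    calc ∑ α, D α t
        = ((∑ α, D α t) ^ σ) ^ (1 / σ) := by
          rw [← Real.rpow_mul hx, mul_one_div, div_self hσ0.ne', Real.rpow_one]
      _ ≤ (B * (1 + t) ^ e) ^ (1 / σ) :=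
          Real.rpow_le_rpow (Real.rpow_nonneg hx σ) h6 (by positivity)
  calc ∑ α, D α t
      ≤ (B * (1 + t) ^ e) ^ (1 / σ) := hfinal
    _ = B ^ (1 / σ) * (1 + t) ^ ((q - 1) / (q * σ)) := by
        rw [Real.mul_rpow hB0.le (Real.rpow_nonneg h1t e), ← Real.rpow_mul h1t]
        congr 2
        rw [he, div_mul_div_comm, mul_one]
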